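/- Let A be a reduced Noetherian ring that satisfies Serre's condition S2 (is S2-saturated). Then A is seminormal if and only if the localization A_p is seminormal for every prime p of height 1. -/

import Mathlib

/-- A reduced commutative ring `A` is seminormal (Swan) if whenever `b, c ∈ A` satisfy
`b³ = c²`, there exists `a ∈ A` with `a² = b` and `a³ = c`. -/
def IsSeminormalRing (A : Type*) [CommRing A] : Prop :=
  ∀ b c : A, b ^ 3 = c ^ 2 → ∃ a : A, a ^ 2 = b ∧ a ^ 3 = c

/-- The height of a prime ideal, as the height of the corresponding point of the prime
spectrum. -/
noncomputable def primeHeight {A : Type*} [CommRing A] (p : Ideal A) (hp : p.IsPrime) :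
    ℕ∞ :=
  Order.height (⟨p, hp⟩ : PrimeSpectrum A)

/-- Serre's condition `S2`: for every prime `p`, `depth (A_p) ≥ min (2, ht p)`, expressed
by the existence of a weakly regular sequence in the maximal ideal of `A_p` of length at
least `min (2, ht p)`. -/
def SerreS2 (A : Type*) [CommRing A] : Prop :=
  ∀ (p : Ideal A) (hp : p.IsPrime),
    ∃ rs : List (Localization.AtPrime p),
      (∀ r ∈ rs, r ∈ IsLocalRing.maximalIdeal (Localization.AtPrime p)) ∧
      RingTheory.Sequence.IsWeaklyRegular (Localization.AtPrime p) rs ∧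
      min 2 (primeHeight p hp) ≤ (rs.length : ℕ∞)

open scoped Pointwise

section Helpers

/-- In a reduced ring, an element is determined by its square and its cube. -/
private lemma sq_cube_unique {R : Type*} [CommRing R] [IsReduced R] {a a' : R}
    (h2 : a ^ 2 = a' ^ 2) (h3 : a ^ 3 = a' ^ 3) : a = a' := by
  have h : (a - a') ^ 3 = 0 := by
    linear_combination 4 * h3 - (3 * a + 3 * a') * h2
  exact sub_eq_zero.mp (IsNilpotent.eq_zero ⟨3, h⟩)

/-- The ideal of "denominators" of the would-be seminormality witness for `b³ = c²`. -/
private def wIdeal {R : Type*} [CommRing R] [IsReduced R] (b c : R) (hbc : b ^ 3 = c ^ 2) :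
    Ideal R where
  carrier := {s | ∃ α, α ^ 2 = s ^ 2 * b ∧ α ^ 3 = s ^ 3 * c}
  zero_mem' := ⟨0, by ring, by ring⟩
  add_mem' := by
    rintro s t ⟨α, hα2, hα3⟩ ⟨β, hβ2, hβ3⟩
    have hαβ : α * β = s * t * b := sq_cube_unique
      (by linear_combination β ^ 2 * hα2 + s ^ 2 * b * hβ2)
      (by linear_combination β ^ 3 * hα3 + s ^ 3 * c * hβ3 - s ^ 3 * t ^ 3 * hbc)
    have h1 : α ^ 2 * β = s ^ 2 * t * c := sq_cube_unique
      (by linear_combination (α ^ 2 + s ^ 2 * b) * β ^ 2 * hα2 + s ^ 4 * b ^ 2 * hβ2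
            + s ^ 4 * t ^ 2 * hbc)
      (by linear_combination (α ^ 3 + s ^ 3 * c) * β ^ 3 * hα3 + s ^ 6 * c ^ 2 * hβ3)
    have h2 : α * β ^ 2 = s * t ^ 2 * c := sq_cube_unique
      (by linear_combination β ^ 4 * hα2 + s ^ 2 * b * (β ^ 2 + t ^ 2 * b) * hβ2
            + s ^ 2 * t ^ 4 * hbc)
      (by linear_combination β ^ 6 * hα3 + s ^ 3 * c * (β ^ 3 + t ^ 3 * c) * hβ3)
    exact ⟨α + β, by linear_combination hα2 + hβ2 + 2 * hαβ,
      by linear_combination hα3 + hβ3 + 3 * h1 + 3 * h2⟩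
  smul_mem' := by
    rintro t s ⟨α, h2, h3⟩
    exact ⟨t * α, by simp only [smul_eq_mul]; linear_combination t ^ 2 * h2,
      by simp only [smul_eq_mul]; linear_combination t ^ 3 * h3⟩

private lemma mem_wIdeal {R : Type*} [CommRing R] [IsReduced R] {b c : R}
    (hbc : b ^ 3 = c ^ 2) {s : R} :
    s ∈ wIdeal b c hbc ↔ ∃ α, α ^ 2 = s ^ 2 * b ∧ α ^ 3 = s ^ 3 * c := Iff.rfl

/-- A power of a regular element is regular. -/
private lemma reg_pow {R : Type*} [CommRing R] {x : R} (hx : ∀ z, x * z = 0 → z = 0) :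
    ∀ n, ∀ z : R, x ^ n * z = 0 → z = 0 := by
  intro n
  induction n with
  | zero => intro z h; simpa using h
  | succ n ih =>
    intro z h
    exact hx z (ih (x * z) (by linear_combination h))

/-- If `x, y` is a regular pair, then `y` is regular modulo any power of `x`. -/
private lemma reg_mod_pow {R : Type*} [CommRing R] {x y : R}
    (hx : ∀ z, x * z = 0 → z = 0)
    (hy : ∀ z : R, (∃ w, y * z = x * w) → ∃ w, z = x * w) :
    ∀ n, ∀ z : R, (∃ w, y * z = x ^ (n + 1) * w) → ∃ w, z = x ^ (n + 1) * w := by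
  intro n
  induction n with
  | zero =>
    rintro z ⟨w, h⟩
    obtain ⟨w', hw'⟩ := hy z ⟨w, by linear_combination h⟩
    exact ⟨w', by linear_combination hw'⟩
  | succ n ih =>
    rintro z ⟨w, h⟩
    obtain ⟨z₁, hz₁⟩ := hy z ⟨x ^ (n + 1) * w, by linear_combination h⟩
    have hkey : x * (y * z₁ - x ^ (n + 1) * w) = 0 := by linear_combination h - y * hz₁
    have h2 : y * z₁ = x ^ (n + 1) * w := sub_eq_zero.mp (hx _ hkey)
    obtain ⟨w', hw'⟩ := ih z₁ ⟨w, h2⟩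
    exact ⟨w', by rw [hz₁, hw']; ring⟩

/-- If `y` is regular mod `x'`, so is any positive power of `y`. -/
private lemma reg_mod_pow' {R : Type*} [CommRing R] {x' y : R}
    (hy : ∀ z : R, (∃ w, y * z = x' * w) → ∃ w, z = x' * w) :
    ∀ m, ∀ z : R, (∃ w, y ^ (m + 1) * z = x' * w) → ∃ w, z = x' * w := by
  intro m
  induction m with
  | zero =>
    rintro z ⟨w, h⟩
    exact hy z ⟨w, by linear_combination h⟩
  | succ m ih =>
    rintro z ⟨w, h⟩
    obtain ⟨w₁, h₁⟩ := hy (y ^ (m + 1) * z) ⟨w, by linear_combination h⟩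
    exact ih z ⟨w₁, h₁⟩

/-- A solution of the seminormality equations in `A_q` produces a witness with
denominator outside `q`. -/
private lemma sol_to_witness {A : Type*} [CommRing A] (q : Ideal A) [hq : q.IsPrime]
    {b c : A} (a : Localization.AtPrime q)
    (ha2 : a ^ 2 = algebraMap A (Localization.AtPrime q) b)
    (ha3 : a ^ 3 = algebraMap A (Localization.AtPrime q) c) :
    ∃ s α : A, s ∉ q ∧ α ^ 2 = s ^ 2 * b ∧ α ^ 3 = s ^ 3 * c := by
  have hsurj : ∃ (α₀ : A) (s : q.primeCompl), Localization.mk α₀ s = a :=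
    Localization.induction_on a fun y => ⟨y.1, y.2, rfl⟩
  obtain ⟨α₀, s, rfl⟩ := hsurj
  rw [Localization.mk_pow, ← Localization.mk_one_eq_algebraMap, Localization.mk_eq_mk_iff,
    Localization.r_iff_exists] at ha2 ha3
  obtain ⟨u, hu⟩ := ha2
  obtain ⟨v, hv⟩ := ha3
  simp only [OneMemClass.coe_one, one_mul, SubmonoidClass.coe_pow] at hu hv
  refine ⟨(s : A) * u * v, α₀ * u * v, ?_, ?_, ?_⟩
  · exact mul_mem (mul_mem s.2 u.2) v.2
  · linear_combination ((u : A) * (v : A) ^ 2) * hu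
  · linear_combination ((u : A) ^ 3 * (v : A) ^ 2) * hv

/-- Seminormality passes to localizations. -/
private lemma seminormal_localization {A : Type*} [CommRing A] (h : IsSeminormalRing A)
    (p : Ideal A) [hp : p.IsPrime] : IsSeminormalRing (Localization.AtPrime p) := by
  intro x y hxy
  have hxs : ∃ (b : A) (s : p.primeCompl), Localization.mk b s = x :=
    Localization.induction_on x fun z => ⟨z.1, z.2, rfl⟩
  have hys : ∃ (c : A) (t : p.primeCompl), Localization.mk c t = y :=
    Localization.induction_on y fun z => ⟨z.1, z.2, rfl⟩
  obtain ⟨b, s, rfl⟩ := hxs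
  obtain ⟨c, t, rfl⟩ := hys
  rw [Localization.mk_pow, Localization.mk_pow, Localization.mk_eq_mk_iff,
    Localization.r_iff_exists] at hxy
  obtain ⟨u, hu⟩ := hxy
  simp only [SubmonoidClass.coe_pow] at hu
  obtain ⟨a, ha2, ha3⟩ := h (b * s * (t : A) ^ 2 * (u : A) ^ 2)
      (c * (s : A) ^ 3 * (t : A) ^ 2 * (u : A) ^ 3)
    (by linear_combination ((s : A) ^ 3 * (t : A) ^ 4 * (u : A) ^ 5) * hu)
  refine ⟨Localization.mk a (s * t * u), ?_, ?_⟩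
  · rw [Localization.mk_pow, Localization.mk_eq_mk_iff, Localization.r_iff_exists]
    refine ⟨1, ?_⟩
    simp only [OneMemClass.coe_one, one_mul, SubmonoidClass.coe_pow, Submonoid.coe_mul]
    linear_combination (s : A) * ha2
  · rw [Localization.mk_pow, Localization.mk_eq_mk_iff, Localization.r_iff_exists]
    refine ⟨1, ?_⟩
    simp only [OneMemClass.coe_one, one_mul, SubmonoidClass.coe_pow, Submonoid.coe_mul]
    linear_combination (t : A) * ha3

end Helpers

/-- Greco–Traverso criterion: a reduced Noetherian ring `A` satisfying Serre's condition
`S2` is seminormal if and only if its localization at every height-one prime is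
seminormal. -/
theorem isSeminormalRing_iff_of_S2 (A : Type*) [CommRing A] [IsNoetherianRing A]
    [IsReduced A] (hS2 : SerreS2 A) :
    IsSeminormalRing A ↔
      ∀ (p : Ideal A) (hp : p.IsPrime), primeHeight p hp = 1 →
        IsSeminormalRing (Localization.AtPrime p) := by
  constructor
  · intro h p hp _
    exact seminormal_localization h p
  · intro hloc b c hbc
    set I := wIdeal b c hbc with hIdef
    suffices hI : I = ⊤ by
      have h1 : (1 : A) ∈ I := hI ▸ Submodule.mem_top
      obtain ⟨α, h2, h3⟩ := h1
      exact ⟨α, by simpa using h2, by simpa using h3⟩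
    by_contra hne
    obtain ⟨M, hMmax, hIM⟩ := Ideal.exists_le_maximal I hne
    haveI := hMmax.isPrime
    obtain ⟨q, hqmin, -⟩ := Ideal.exists_minimalPrimes_le hIM
    obtain ⟨⟨hqprime, hIq⟩, hmin⟩ := hqmin
    haveI := hqprime
    have hsol : ∃ a : Localization.AtPrime q,
        a ^ 2 = algebraMap A (Localization.AtPrime q) b ∧
        a ^ 3 = algebraMap A (Localization.AtPrime q) c := by
      set R := Localization.AtPrime q with hRdef
      have hbc' : (algebraMap A R b) ^ 3 = (algebraMap A R c) ^ 2 := by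
        rw [← map_pow, ← map_pow, hbc]
      by_cases hht : primeHeight q hqprime ≤ 1
      · rcases hht.lt_or_eq with hlt | heq
        · -- height zero: the localization is a field
          have h0 : primeHeight q hqprime = 0 := ENat.lt_one_iff_eq_zero.mp hlt
          have hismin : IsMin (⟨q, hqprime⟩ : PrimeSpectrum A) :=
            Order.height_eq_zero.mp h0
          have hmax : IsLocalRing.maximalIdeal R = ⊥ := by
            have h1 : IsLocalRing.maximalIdeal R ≤ nilradical R := by
              rw [nilradical_eq_sInf]
              refine le_sInf ?_
              rintro P hP
              haveI := hP
              have hPle : P ≤ IsLocalRing.maximalIdeal R :=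
                IsLocalRing.le_maximalIdeal hP.ne_top
              have hcomle : P.comap (algebraMap A R) ≤ q :=
                (Ideal.comap_mono hPle).trans_eq Localization.AtPrime.comap_maximalIdeal
              have hqcom : q ≤ P.comap (algebraMap A R) := by
                have hle : (⟨P.comap (algebraMap A R), hP.comap _⟩ : PrimeSpectrum A) ≤
                    ⟨q, hqprime⟩ := (PrimeSpectrum.asIdeal_le_asIdeal _ _).mp hcomle
                exact (PrimeSpectrum.asIdeal_le_asIdeal _ _).mpr (hismin hle)
              calc IsLocalRing.maximalIdeal R
                  = Ideal.map (algebraMap A R) q :=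
                    Localization.AtPrime.map_eq_maximalIdeal.symm
                _ ≤ Ideal.map (algebraMap A R) (P.comap (algebraMap A R)) :=
                    Ideal.map_mono hqcom
                _ ≤ P := Ideal.map_comap_le
            rw [nilradical_eq_zero] at h1
            exact le_bot_iff.mp h1
          by_cases hb : algebraMap A R b = 0
          · have hc : algebraMap A R c = 0 := by
              have : (algebraMap A R c) ^ 2 = 0 := by rw [← hbc', hb]; ring
              exact IsNilpotent.eq_zero ⟨2, this⟩
            exact ⟨0, by rw [hb]; ring, by rw [hc]; ring⟩
          · have hbu : IsUnit (algebraMap A R b) := by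
              by_contra hnu
              have hmem : algebraMap A R b ∈ IsLocalRing.maximalIdeal R :=
                (IsLocalRing.mem_maximalIdeal _).mpr hnu
              rw [hmax, Ideal.mem_bot] at hmem
              exact hb hmem
            obtain ⟨u, hu⟩ := hbu
            have key : algebraMap A R b * ↑u⁻¹ = 1 := by rw [← hu]; exact u.mul_inv
            refine ⟨algebraMap A R c * ↑u⁻¹, ?_, ?_⟩
            · calc (algebraMap A R c * ↑u⁻¹) ^ 2
                  = (algebraMap A R b) ^ 3 * (↑u⁻¹ : R) ^ 2 := by rw [hbc']; ring
                _ = algebraMap A R b * (algebraMap A R b * ↑u⁻¹) ^ 2 := by ring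
                _ = algebraMap A R b := by rw [key]; ring
            · calc (algebraMap A R c * ↑u⁻¹) ^ 3
                  = algebraMap A R c * (algebraMap A R b) ^ 3 * (↑u⁻¹ : R) ^ 3 := by
                    rw [hbc']; ring
                _ = algebraMap A R c * (algebraMap A R b * ↑u⁻¹) ^ 3 := by ring
                _ = algebraMap A R c := by rw [key]; ring
        · -- height one: use the hypothesis
          haveI := hqprime
          exact hloc q hqprime heq (algebraMap A R b) (algebraMap A R c) hbc'
      · -- height at least two: use depth
        set J := wIdeal (algebraMap A R b) (algebraMap A R c) hbc' with hJdef
        have hmrad : IsLocalRing.maximalIdeal R ≤ J.radical := by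
          rw [Ideal.radical_eq_sInf]
          refine le_sInf ?_
          rintro P ⟨hJP, hP⟩
          haveI := hP
          have hPle : P ≤ IsLocalRing.maximalIdeal R :=
            IsLocalRing.le_maximalIdeal hP.ne_top
          have hcomle : P.comap (algebraMap A R) ≤ q :=
            (Ideal.comap_mono hPle).trans_eq Localization.AtPrime.comap_maximalIdeal
          have hIcom : I ≤ P.comap (algebraMap A R) := by
            rintro s ⟨α, h2, h3⟩
            have hsJ : algebraMap A R s ∈ J := by
              refine ⟨algebraMap A R α, ?_, ?_⟩
              · rw [← map_pow, h2, map_mul, map_pow]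
              · rw [← map_pow, h3, map_mul, map_pow]
            exact hJP hsJ
          have hqcom : q ≤ P.comap (algebraMap A R) :=
            hmin ⟨hP.comap _, hIcom⟩ hcomle
          calc IsLocalRing.maximalIdeal R
              = Ideal.map (algebraMap A R) q := Localization.AtPrime.map_eq_maximalIdeal.symm
            _ ≤ Ideal.map (algebraMap A R) (P.comap (algebraMap A R)) := Ideal.map_mono hqcom
            _ ≤ P := Ideal.map_comap_le
        obtain ⟨rs, hrsm, hrsreg, hrslen⟩ := hS2 q hqprime
        have hlen2 : 2 ≤ rs.length := by
          have hge : (2 : ℕ∞) ≤ primeHeight q hqprime := by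
            have h1 : (1 : ℕ∞) < primeHeight q hqprime := lt_of_not_ge hht
            have := Order.add_one_le_of_lt h1
            simpa [one_add_one_eq_two] using this
          have h2 : (2 : ℕ∞) ≤ (rs.length : ℕ∞) := (min_eq_left hge ▸ hrslen)
          exact_mod_cast h2
        obtain ⟨x, y, rest, rfl⟩ : ∃ x y rest, rs = x :: y :: rest := by
          rcases rs with - | ⟨x, - | ⟨y, rest⟩⟩
          · simp at hlen2
          · simp at hlen2
          · exact ⟨x, y, rest, rfl⟩
        rw [RingTheory.Sequence.isWeaklyRegular_cons_iff] at hrsreg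
        obtain ⟨hxreg, hrest⟩ := hrsreg
        rw [RingTheory.Sequence.isWeaklyRegular_cons_iff] at hrest
        obtain ⟨hyreg, -⟩ := hrest
        have hx : ∀ z : R, x * z = 0 → z = 0 := by
          intro z h
          exact hxreg (a₁ := z) (a₂ := 0) (show x • z = x • (0 : R) by
            simpa [smul_eq_mul] using h)
        have memiff : ∀ z : R, z ∈ (x • (⊤ : Submodule R R)) ↔ ∃ w, z = x * w := by
          intro z
          rw [← SetLike.mem_coe, Submodule.coe_pointwise_smul]
          constructor
          · rintro ⟨w, -, rfl⟩
            exact ⟨w, (smul_eq_mul _ _).symm⟩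
          · rintro ⟨w, rfl⟩
            exact ⟨w, Submodule.mem_top, smul_eq_mul _ _⟩
        have hy : ∀ z : R, (∃ w, y * z = x * w) → ∃ w, z = x * w := by
          rintro z ⟨w, hw⟩
          have hmem : y * z ∈ (x • (⊤ : Submodule R R)) := (memiff _).mpr ⟨w, hw⟩
          have hq0 : (Submodule.Quotient.mk (y * z) : QuotSMulTop x R) = 0 :=
            (Submodule.Quotient.mk_eq_zero _).mpr hmem
          have h0 : y • (Submodule.Quotient.mk z : QuotSMulTop x R) =
              y • (0 : QuotSMulTop x R) := by
            rw [smul_zero, ← Submodule.Quotient.mk_smul, smul_eq_mul, hq0]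
          have hz0 := hyreg h0
          exact (memiff _).mp ((Submodule.Quotient.mk_eq_zero _).mp hz0)
        have hxJ : ∃ n, x ^ (n + 1) ∈ J := by
          obtain ⟨n, hn⟩ := Ideal.mem_radical_iff.mp (hmrad (hrsm x (by simp)))
          exact ⟨n, by rw [pow_succ]; exact Ideal.mul_mem_right _ _ hn⟩
        have hyJ : ∃ k, y ^ (k + 1) ∈ J := by
          obtain ⟨k, hk⟩ := Ideal.mem_radical_iff.mp (hmrad (hrsm y (by simp)))
          exact ⟨k, by rw [pow_succ]; exact Ideal.mul_mem_right _ _ hk⟩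
        obtain ⟨n, hxJ⟩ := hxJ
        obtain ⟨k, hyJ⟩ := hyJ
        set x' := x ^ (n + 1) with hx'def
        set y' := y ^ (k + 1) with hy'def
        obtain ⟨α, hα2, hα3⟩ := hxJ
        obtain ⟨β, hβ2, hβ3⟩ := hyJ
        have hx' : ∀ z : R, x' * z = 0 → z = 0 := reg_pow hx (n + 1)
        have hyx' : ∀ z : R, (∃ w, y * z = x' * w) → ∃ w, z = x' * w :=
          reg_mod_pow hx hy n
        have hy' : ∀ z : R, (∃ w, y' * z = x' * w) → ∃ w, z = x' * w :=
          reg_mod_pow' hyx' k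
        have hαβ : α * y' = β * x' := sq_cube_unique
          (by linear_combination y' ^ 2 * hα2 - x' ^ 2 * hβ2)
          (by linear_combination y' ^ 3 * hα3 - x' ^ 3 * hβ3)
        obtain ⟨a, ha⟩ := hy' α ⟨β, by linear_combination hαβ⟩
        refine ⟨a, ?_, ?_⟩
        · have hz : x' * (x' * (a ^ 2 - algebraMap A R b)) = 0 := by
            linear_combination hα2 - (α + x' * a) * ha
          exact sub_eq_zero.mp (hx' _ (hx' _ hz))
        · have hz : x' * (x' * (x' * (a ^ 3 - algebraMap A R c))) = 0 := by
            linear_combination hα3 - (α ^ 2 + α * (x' * a) + (x' * a) ^ 2) * ha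
          exact sub_eq_zero.mp (hx' _ (hx' _ (hx' _ hz)))
    obtain ⟨a, ha2, ha3⟩ := hsol
    obtain ⟨s, α, hs, hw2, hw3⟩ := sol_to_witness q a ha2 ha3
    exact hs (hIq ⟨α, hw2, hw3⟩)
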